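/- Let A be a linearly ordered group and G a directed po-group. Then the unrestricted Wreath product A Wr G satisfies RDP if and only if G satisfies RDP. -/

import Mathlib

/-! Riesz decomposition properties relative to explicit multiplication `mul`,
unit `one`, and order relation `le`, together with the lexicographic product
order and (unrestricted/restricted, right/left) wreath products of po-groups. -/

/-- The Riesz decomposition property (RDP). -/
def RDPWith {M : Type*} (mul : M → M → M) (one : M) (le : M → M → Prop) : Prop :=
  ∀ a₁ a₂ b₁ b₂ : M,
    le one a₁ → le one a₂ → le one b₁ → le one b₂ → mul a₁ a₂ = mul b₁ b₂ →
    ∃ c₁₁ c₁₂ c₂₁ c₂₂ : M,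
      le one c₁₁ ∧ le one c₁₂ ∧ le one c₂₁ ∧ le one c₂₂ ∧
      a₁ = mul c₁₁ c₁₂ ∧ a₂ = mul c₂₁ c₂₂ ∧ b₁ = mul c₁₁ c₂₁ ∧ b₂ = mul c₁₂ c₂₂

/-- The Riesz decomposition property RDP₁ (commutativity below the
cross-diagonal entries `c₁₂`, `c₂₁`). -/
def RDP1With {M : Type*} (mul : M → M → M) (one : M) (le : M → M → Prop) : Prop :=
  ∀ a₁ a₂ b₁ b₂ : M,
    le one a₁ → le one a₂ → le one b₁ → le one b₂ → mul a₁ a₂ = mul b₁ b₂ →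
    ∃ c₁₁ c₁₂ c₂₁ c₂₂ : M,
      le one c₁₁ ∧ le one c₁₂ ∧ le one c₂₁ ∧ le one c₂₂ ∧
      a₁ = mul c₁₁ c₁₂ ∧ a₂ = mul c₂₁ c₂₂ ∧ b₁ = mul c₁₁ c₂₁ ∧ b₂ = mul c₁₂ c₂₂ ∧
      (∀ x y : M, le one x → le x c₁₂ → le one y → le y c₂₁ → mul x y = mul y x)

/-- The Riesz decomposition property RDP₂ (the infimum of `c₁₂` and `c₂₁`
exists and equals `one`; the last clause, together with `le one c₁₂` and
`le one c₂₁`, says exactly that `one` is the greatest lower bound). -/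
def RDP2With {M : Type*} (mul : M → M → M) (one : M) (le : M → M → Prop) : Prop :=
  ∀ a₁ a₂ b₁ b₂ : M,
    le one a₁ → le one a₂ → le one b₁ → le one b₂ → mul a₁ a₂ = mul b₁ b₂ →
    ∃ c₁₁ c₁₂ c₂₁ c₂₂ : M,
      le one c₁₁ ∧ le one c₁₂ ∧ le one c₂₁ ∧ le one c₂₂ ∧
      a₁ = mul c₁₁ c₁₂ ∧ a₂ = mul c₂₁ c₂₂ ∧ b₁ = mul c₁₁ c₂₁ ∧ b₂ = mul c₁₂ c₂₂ ∧
      (∀ z : M, le z c₁₂ → le z c₂₁ → le z one)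

/-- RDP for the sub-po-group carried by the subset `S`. -/
def RDPWithOn {M : Type*} (S : Set M) (mul : M → M → M) (one : M)
    (le : M → M → Prop) : Prop :=
  ∀ a₁ a₂ b₁ b₂ : M, a₁ ∈ S → a₂ ∈ S → b₁ ∈ S → b₂ ∈ S →
    le one a₁ → le one a₂ → le one b₁ → le one b₂ → mul a₁ a₂ = mul b₁ b₂ →
    ∃ c₁₁ c₁₂ c₂₁ c₂₂ : M, c₁₁ ∈ S ∧ c₁₂ ∈ S ∧ c₂₁ ∈ S ∧ c₂₂ ∈ S ∧
      le one c₁₁ ∧ le one c₁₂ ∧ le one c₂₁ ∧ le one c₂₂ ∧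
      a₁ = mul c₁₁ c₁₂ ∧ a₂ = mul c₂₁ c₂₂ ∧ b₁ = mul c₁₁ c₂₁ ∧ b₂ = mul c₁₂ c₂₂

/-- RDP₁ for the sub-po-group carried by the subset `S`. -/
def RDP1WithOn {M : Type*} (S : Set M) (mul : M → M → M) (one : M)
    (le : M → M → Prop) : Prop :=
  ∀ a₁ a₂ b₁ b₂ : M, a₁ ∈ S → a₂ ∈ S → b₁ ∈ S → b₂ ∈ S →
    le one a₁ → le one a₂ → le one b₁ → le one b₂ → mul a₁ a₂ = mul b₁ b₂ →
    ∃ c₁₁ c₁₂ c₂₁ c₂₂ : M, c₁₁ ∈ S ∧ c₁₂ ∈ S ∧ c₂₁ ∈ S ∧ c₂₂ ∈ S ∧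
      le one c₁₁ ∧ le one c₁₂ ∧ le one c₂₁ ∧ le one c₂₂ ∧
      a₁ = mul c₁₁ c₁₂ ∧ a₂ = mul c₂₁ c₂₂ ∧ b₁ = mul c₁₁ c₂₁ ∧ b₂ = mul c₁₂ c₂₂ ∧
      (∀ x y : M, x ∈ S → y ∈ S →
        le one x → le x c₁₂ → le one y → le y c₂₁ → mul x y = mul y x)

/-- RDP₂ for the sub-po-group carried by the subset `S`. -/
def RDP2WithOn {M : Type*} (S : Set M) (mul : M → M → M) (one : M)
    (le : M → M → Prop) : Prop :=
  ∀ a₁ a₂ b₁ b₂ : M, a₁ ∈ S → a₂ ∈ S → b₁ ∈ S → b₂ ∈ S →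
    le one a₁ → le one a₂ → le one b₁ → le one b₂ → mul a₁ a₂ = mul b₁ b₂ →
    ∃ c₁₁ c₁₂ c₂₁ c₂₂ : M, c₁₁ ∈ S ∧ c₁₂ ∈ S ∧ c₂₁ ∈ S ∧ c₂₂ ∈ S ∧
      le one c₁₁ ∧ le one c₁₂ ∧ le one c₂₁ ∧ le one c₂₂ ∧
      a₁ = mul c₁₁ c₁₂ ∧ a₂ = mul c₂₁ c₂₂ ∧ b₁ = mul c₁₁ c₂₁ ∧ b₂ = mul c₁₂ c₂₂ ∧
      (∀ z : M, z ∈ S → le z c₁₂ → le z c₂₁ → le z one)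

/-- The Riesz interpolation property (RIP). -/
def RIPWith {M : Type*} (le : M → M → Prop) : Prop :=
  ∀ a₁ a₂ b₁ b₂ : M, le a₁ b₁ → le a₁ b₂ → le a₂ b₁ → le a₂ b₂ →
    ∃ c : M, le a₁ c ∧ le a₂ c ∧ le c b₁ ∧ le c b₂

/-- RIP for the subposet carried by the subset `S`. -/
def RIPWithOn {M : Type*} (S : Set M) (le : M → M → Prop) : Prop :=
  ∀ a₁ a₂ b₁ b₂ : M, a₁ ∈ S → a₂ ∈ S → b₁ ∈ S → b₂ ∈ S →
    le a₁ b₁ → le a₁ b₂ → le a₂ b₁ → le a₂ b₂ →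
    ∃ c ∈ S, le a₁ c ∧ le a₂ c ∧ le c b₁ ∧ le c b₂

/-- The lexicographic order on a product: `(g₁,h₁) ≤ (g₂,h₂)` iff `g₁ < g₂`,
or `g₁ = g₂` and `h₁ ≤ h₂`. -/
def lexLE {A B : Type*} [PartialOrder A] [LE B] (p q : A × B) : Prop :=
  p.1 < q.1 ∨ (p.1 = q.1 ∧ p.2 ≤ q.2)

/-- A poset is an antilattice if only comparable pairs of elements have a
join or a meet. -/
def IsAntilattice (G : Type*) [PartialOrder G] : Prop :=
  ∀ a b : G, ((∃ s, IsLUB {a, b} s) ∨ (∃ s, IsGLB {a, b} s)) → a ≤ b ∨ b ≤ a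

/-- Multiplication of the unrestricted Wreath product `A Wr G`:
`(n,⟨g_a⟩)·(m,⟨h_a⟩) = (n·m, ⟨g_a·h_{a·n}⟩)`. -/
def wrMul {A G : Type*} [Mul A] [Mul G] (p q : A × (A → G)) : A × (A → G) :=
  (p.1 * q.1, fun a => p.2 a * q.2 (a * p.1))

/-- The unit of the Wreath product `A Wr G`. -/
def wrOne (A G : Type*) [One A] [One G] : A × (A → G) :=
  (1, fun _ => 1)

/-- The order of the Wreath product `A Wr G`: `(n,⟨g_a⟩) ≤ (m,⟨h_a⟩)` iff
`n < m`, or `n = m` and `g_a ≤ h_a` for all `a`. -/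
def wrLE {A G : Type*} [PartialOrder A] [LE G] (p q : A × (A → G)) : Prop :=
  p.1 < q.1 ∨ (p.1 = q.1 ∧ ∀ a, p.2 a ≤ q.2 a)

/-- The carrier of the restricted Wreath product `A wr G`: elements whose
second component equals `1` at all but finitely many places. -/
def wrS (A G : Type*) [One G] : Set (A × (A → G)) :=
  {p | (Function.mulSupport p.2).Finite}

/-- Multiplication of the wreath products over `ℤ`:
`(n,⟨g_i⟩)·(m,⟨h_i⟩) = (n+m, ⟨g_i·h_{i+n}⟩)`. -/
def zwrMul {G : Type*} [Mul G] (p q : ℤ × (ℤ → G)) : ℤ × (ℤ → G) :=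
  (p.1 + q.1, fun i => p.2 i * q.2 (i + p.1))

/-- The unit of the wreath products over `ℤ`. -/
def zwrOne (G : Type*) [One G] : ℤ × (ℤ → G) :=
  (0, fun _ => 1)

/-- The inverse in the wreath products over `ℤ`. -/
def zwrInv {G : Type*} [Inv G] (p : ℤ × (ℤ → G)) : ℤ × (ℤ → G) :=
  (-p.1, fun i => (p.2 (i - p.1))⁻¹)

/-- The carrier of the (restricted) wreath products over `ℤ`: elements with
`g_i = 1` for all but finitely many `i`. -/
def zwrS (G : Type*) [One G] : Set (ℤ × (ℤ → G)) :=
  {p | (Function.mulSupport p.2).Finite}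

/-- Strict positivity in the right wreath product `ℤ →wr G`: either `n > 0`,
or `n = 0`, some `g_i ≠ 1`, and `g_j > 1` where `j` is the greatest index `i`
with `g_i ≠ 1`. -/
def rPos {G : Type*} [One G] [LT G] (p : ℤ × (ℤ → G)) : Prop :=
  0 < p.1 ∨ (p.1 = 0 ∧ ∃ j : ℤ, 1 < p.2 j ∧ ∀ i : ℤ, j < i → p.2 i = 1)

/-- Strict positivity in the left wreath product `ℤ ←wr G`: either `n > 0`,
or `n = 0`, some `g_i ≠ 1`, and `g_j > 1` where `j` is the least index `i`
with `g_i ≠ 1`. -/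
def lPos {G : Type*} [One G] [LT G] (p : ℤ × (ℤ → G)) : Prop :=
  0 < p.1 ∨ (p.1 = 0 ∧ ∃ j : ℤ, 1 < p.2 j ∧ ∀ i : ℤ, i < j → p.2 i = 1)

/-- The order of the right wreath product `ℤ →wr G`. -/
def rLE {G : Type*} [Group G] [LT G] (p q : ℤ × (ℤ → G)) : Prop :=
  p = q ∨ rPos (zwrMul (zwrInv p) q)

/-- The order of the left wreath product `ℤ ←wr G`. -/
def lLE {G : Type*} [Group G] [LT G] (p q : ℤ × (ℤ → G)) : Prop :=
  p = q ∨ lPos (zwrMul (zwrInv p) q)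


section Aux

variable {A G : Type*} [Group A] [LinearOrder A]
    [CovariantClass A A (· * ·) (· ≤ ·)]
    [CovariantClass A A (Function.swap (· * ·)) (· ≤ ·)]
    [Group G] [PartialOrder G]
    [CovariantClass G G (· * ·) (· ≤ ·)]
    [CovariantClass G G (Function.swap (· * ·)) (· ≤ ·)]

lemma wr_aux_one {x y : A} (hx : 1 ≤ x) (hy : 1 ≤ y) (h : x * y = 1) :
    x = 1 ∧ y = 1 := by
  have hx1 : x ≤ 1 := by
    calc x = x * 1 := (mul_one x).symm
    _ ≤ x * y := mul_le_mul_right hy x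
    _ = 1 := h
  have hxe : x = 1 := le_antisymm hx1 hx
  subst hxe
  rw [one_mul] at h
  exact ⟨rfl, h⟩

lemma wr_pos_fst {p : A × (A → G)} (hp : wrLE (wrOne A G) p) : 1 < p.1 ∨ p.1 = 1 := by
  unfold wrLE wrOne at hp
  rcases hp with hl | ⟨he, _⟩
  · exact Or.inl hl
  · exact Or.inr he.symm

lemma wr_pos_fst_le {p : A × (A → G)} (hp : wrLE (wrOne A G) p) : 1 ≤ p.1 := by
  rcases wr_pos_fst hp with hl | he
  · exact le_of_lt hl
  · exact le_of_eq he.symm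

lemma wr_pos_pt {p : A × (A → G)} (hp : wrLE (wrOne A G) p) (h1 : p.1 = 1) :
    ∀ a, 1 ≤ p.2 a := by
  unfold wrLE wrOne at hp
  rcases hp with hl | ⟨_, hle⟩
  · rw [h1] at hl; exact absurd hl (lt_irrefl _)
  · exact hle

end Aux

/-- For a linearly ordered group `A` and a directed po-group `G`,
the unrestricted Wreath product `A Wr G` satisfies RDP iff `G` does. -/
theorem wreath_rdp_iff {A G : Type*} [Group A] [LinearOrder A]
    [CovariantClass A A (· * ·) (· ≤ ·)]
    [CovariantClass A A (Function.swap (· * ·)) (· ≤ ·)]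
    [Group G] [PartialOrder G]
    [CovariantClass G G (· * ·) (· ≤ ·)]
    [CovariantClass G G (Function.swap (· * ·)) (· ≤ ·)]
    (hdir : ∀ x y : G, ∃ z : G, x ≤ z ∧ y ≤ z) :
    RDPWith (fun p q : A × (A → G) => wrMul p q) (wrOne A G) wrLE ↔
      RDPWith (fun a b : G => a * b) 1 (· ≤ ·) := by
  constructor
  · -- forward: RDP on the wreath product implies RDP on G
    intro hW a₁ a₂ b₁ b₂ h1 h2 h3 h4 heq
    obtain ⟨c₁₁, c₁₂, c₂₁, c₂₂, p11, p12, p21, p22, e1, e2, e3, e4⟩ :=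
      hW (1, fun _ => a₁) (1, fun _ => a₂) (1, fun _ => b₁) (1, fun _ => b₂)
        (Or.inr ⟨rfl, fun _ => h1⟩) (Or.inr ⟨rfl, fun _ => h2⟩)
        (Or.inr ⟨rfl, fun _ => h3⟩) (Or.inr ⟨rfl, fun _ => h4⟩)
        (by have heq' : a₁ * a₂ = b₁ * b₂ := heq
            simp only [wrMul, heq'])
    have f1 : (1 : A) = c₁₁.1 * c₁₂.1 := congrArg Prod.fst e1
    have f2 : (1 : A) = c₂₁.1 * c₂₂.1 := congrArg Prod.fst e2
    have f3 : (1 : A) = c₁₁.1 * c₂₁.1 := congrArg Prod.fst e3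
    obtain ⟨q11, q12⟩ := wr_aux_one (wr_pos_fst_le p11) (wr_pos_fst_le p12) f1.symm
    obtain ⟨-, q21⟩ := wr_aux_one (wr_pos_fst_le p11) (wr_pos_fst_le p21) f3.symm
    obtain ⟨-, q22⟩ := wr_aux_one (wr_pos_fst_le p21) (wr_pos_fst_le p22) f2.symm
    refine ⟨c₁₁.2 1, c₁₂.2 1, c₂₁.2 1, c₂₂.2 1,
      wr_pos_pt p11 q11 1, wr_pos_pt p12 q12 1, wr_pos_pt p21 q21 1, wr_pos_pt p22 q22 1,
      ?_, ?_, ?_, ?_⟩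
    · simpa [wrMul, q11] using congrFun (congrArg Prod.snd e1) 1
    · simpa [wrMul, q21] using congrFun (congrArg Prod.snd e2) 1
    · simpa [wrMul, q11] using congrFun (congrArg Prod.snd e3) 1
    · simpa [wrMul, q12] using congrFun (congrArg Prod.snd e4) 1
  · -- backward: RDP on G implies RDP on the wreath product
    intro hG p₁ p₂ q₁ q₂ hp₁ hp₂ hq₁ hq₂ heq
    obtain ⟨n₁, f⟩ := p₁
    obtain ⟨n₂, g⟩ := p₂
    obtain ⟨m₁, h⟩ := q₁
    obtain ⟨m₂, k⟩ := q₂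
    have hfst : n₁ * n₂ = m₁ * m₂ := congrArg Prod.fst heq
    have hmaster : ∀ a, f a * g (a * n₁) = h a * k (a * m₁) :=
      fun a => congrFun (congrArg Prod.snd heq) a
    rcases lt_trichotomy n₁ m₁ with hlt | heqn | hgt
    · -- a₁ < b₁ : trivial decomposition
      refine ⟨(n₁, f), wrOne A G,
        (n₁⁻¹ * m₁, fun a => (f (a * n₁⁻¹))⁻¹ * h (a * n₁⁻¹)), (m₂, k),
        hp₁, Or.inr ⟨rfl, fun a => le_refl 1⟩,
        Or.inl (show (1:A) < n₁⁻¹ * m₁ by simpa using mul_lt_mul_right hlt n₁⁻¹), hq₂, ?_, ?_, ?_, ?_⟩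
      · simp [wrMul, wrOne]
      · simp only [wrMul, Prod.mk.injEq]
        constructor
        · rw [mul_assoc, ← hfst, inv_mul_cancel_left]
        · funext a
          have hm := hmaster (a * n₁⁻¹)
          rw [inv_mul_cancel_right] at hm
          rw [← mul_assoc a, mul_assoc _ _ (k _), ← hm, inv_mul_cancel_left]
      · simp only [wrMul, Prod.mk.injEq]
        exact ⟨(mul_inv_cancel_left n₁ m₁).symm, by
          funext a; rw [mul_inv_cancel_right, mul_inv_cancel_left]⟩
      · simp [wrMul, wrOne]
    · -- n₁ = m₁ : the main case, uses RDP of G and directedness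
      subst heqn
      have hn2 : n₂ = m₂ := mul_left_cancel hfst
      subst hn2
      have hn₁ : 1 < n₁ ∨ n₁ = 1 := wr_pos_fst hp₁
      have hn₂ : 1 < n₂ ∨ n₂ = 1 := wr_pos_fst hp₂
      obtain ⟨t, ht1, ht2, ht3⟩ : ∃ t : A → G, (∀ a, 1 ≤ t a * f a) ∧
          (∀ a, 1 ≤ t a * h a) ∧ (n₁ = 1 → ∀ a, t a = 1) := by
        by_cases hn : n₁ = 1
        · exact ⟨fun _ => 1, fun a => by simpa using wr_pos_pt hp₁ hn a,
            fun a => by simpa using wr_pos_pt hq₁ hn a, fun _ _ => rfl⟩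
        · choose z hz1 hz2 using fun a => hdir (f a)⁻¹ (h a)⁻¹
          refine ⟨z, fun a => ?_, fun a => ?_, fun e => absurd e hn⟩
          · calc (1:G) = (f a)⁻¹ * f a := (inv_mul_cancel _).symm
            _ ≤ z a * f a := mul_le_mul_left (hz1 a) _
          · calc (1:G) = (h a)⁻¹ * h a := (inv_mul_cancel _).symm
            _ ≤ z a * h a := mul_le_mul_left (hz2 a) _
      obtain ⟨t', ht1', ht2', ht3'⟩ : ∃ t' : A → G, (∀ a, 1 ≤ g a * t' a) ∧
          (∀ a, 1 ≤ k a * t' a) ∧ (n₂ = 1 → ∀ a, t' a = 1) := by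
        by_cases hn : n₂ = 1
        · exact ⟨fun _ => 1, fun a => by simpa using wr_pos_pt hp₂ hn a,
            fun a => by simpa using wr_pos_pt hq₂ hn a, fun _ _ => rfl⟩
        · choose z hz1 hz2 using fun a => hdir (g a)⁻¹ (k a)⁻¹
          refine ⟨z, fun a => ?_, fun a => ?_, fun e => absurd e hn⟩
          · calc (1:G) = g a * (g a)⁻¹ := (mul_inv_cancel _).symm
            _ ≤ g a * z a := mul_le_mul_right (hz1 a) _
          · calc (1:G) = k a * (k a)⁻¹ := (mul_inv_cancel _).symm
            _ ≤ k a * z a := mul_le_mul_right (hz2 a) _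
      have key : ∀ a, ∃ c₁₁ c₁₂ c₂₁ c₂₂ : G,
          1 ≤ c₁₁ ∧ 1 ≤ c₁₂ ∧ 1 ≤ c₂₁ ∧ 1 ≤ c₂₂ ∧
          t a * f a = c₁₁ * c₁₂ ∧ g (a * n₁) * t' (a * n₁) = c₂₁ * c₂₂ ∧
          t a * h a = c₁₁ * c₂₁ ∧ k (a * n₁) * t' (a * n₁) = c₁₂ * c₂₂ := by
        intro a
        have hm : (t a * f a) * (g (a * n₁) * t' (a * n₁)) =
            (t a * h a) * (k (a * n₁) * t' (a * n₁)) := by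
          have : f a * (g (a * n₁) * t' (a * n₁)) =
              h a * (k (a * n₁) * t' (a * n₁)) := by
            rw [← mul_assoc, hmaster a, mul_assoc]
          rw [mul_assoc, this, mul_assoc]
        exact hG (t a * f a) (g (a * n₁) * t' (a * n₁)) (t a * h a)
          (k (a * n₁) * t' (a * n₁)) (ht1 a) (ht1' _) (ht2 a) (ht2' _) hm
      choose d₁₁ d₁₂ d₂₁ d₂₂ hd11 hd12 hd21 hd22 he1 he2 he3 he4 using key
      refine ⟨(n₁, fun a => (t a)⁻¹ * d₁₁ a),
        (1, fun a => d₁₂ (a * n₁⁻¹)),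
        (1, fun a => d₂₁ (a * n₁⁻¹)),
        (n₂, fun a => d₂₂ (a * n₁⁻¹) * (t' a)⁻¹), ?_, ?_, ?_, ?_, ?_, ?_, ?_, ?_⟩
      · rcases hn₁ with hl | he
        · exact Or.inl hl
        · exact Or.inr ⟨he.symm, fun a => by simpa [ht3 he a, wrOne] using hd11 a⟩
      · exact Or.inr ⟨rfl, fun a => hd12 _⟩
      · exact Or.inr ⟨rfl, fun a => hd21 _⟩
      · rcases hn₂ with hl | he
        · exact Or.inl hl
        · exact Or.inr ⟨he.symm, fun a => by simpa [ht3' he a, wrOne] using hd22 _⟩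
      · simp only [wrMul, Prod.mk.injEq]
        refine ⟨(mul_one n₁).symm, funext fun a => ?_⟩
        rw [mul_inv_cancel_right, mul_assoc, ← he1 a, inv_mul_cancel_left]
      · simp only [wrMul, Prod.mk.injEq]
        refine ⟨(one_mul n₂).symm, funext fun a => ?_⟩
        have := he2 (a * n₁⁻¹)
        rw [inv_mul_cancel_right] at this
        rw [mul_one, ← mul_assoc, ← this, mul_inv_cancel_right]
      · simp only [wrMul, Prod.mk.injEq]
        refine ⟨(mul_one n₁).symm, funext fun a => ?_⟩
        rw [mul_inv_cancel_right, mul_assoc, ← he3 a, inv_mul_cancel_left]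
      · simp only [wrMul, Prod.mk.injEq]
        refine ⟨(one_mul n₂).symm, funext fun a => ?_⟩
        have := he4 (a * n₁⁻¹)
        rw [inv_mul_cancel_right] at this
        rw [mul_one, ← mul_assoc, ← this, mul_inv_cancel_right]
    · -- b₁ < a₁ : trivial decomposition the other way
      refine ⟨(m₁, h),
        (m₁⁻¹ * n₁, fun a => (h (a * m₁⁻¹))⁻¹ * f (a * m₁⁻¹)), wrOne A G,
        (n₂, g), hq₁, Or.inl (show (1:A) < m₁⁻¹ * n₁ by simpa using mul_lt_mul_right hgt m₁⁻¹),
        Or.inr ⟨rfl, fun a => le_refl 1⟩, hp₂, ?_, ?_, ?_, ?_⟩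
      · simp only [wrMul, Prod.mk.injEq]
        exact ⟨(mul_inv_cancel_left m₁ n₁).symm, by
          funext a; rw [mul_inv_cancel_right, mul_inv_cancel_left]⟩
      · simp [wrMul, wrOne]
      · simp [wrMul, wrOne]
      · simp only [wrMul, Prod.mk.injEq]
        constructor
        · rw [mul_assoc, hfst, inv_mul_cancel_left]
        · funext a
          have hm := hmaster (a * m₁⁻¹)
          rw [inv_mul_cancel_right] at hm
          rw [← mul_assoc a, mul_assoc _ _ (g _), hm, inv_mul_cancel_left]
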